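/- Consider the recurrence δ_t = −1/(ρ + δ_{t−1}) with δ_0 = 0 and ρ = (1+r)/√r for some r with 0 < r < 1. Then the sequence (δ_t) converges, and its limit δ_∞ satisfies δ_∞ = −1/(ρ + δ_∞); moreover δ_∞ = −√r (the root of δ² + ρδ + 1 = 0 with |δ| < 1). -/

import Mathlib

open Filter

theorem stmt_13 (r : ℝ) (hr0 : 0 < r) (hr1 : r < 1)
    (ρ : ℝ) (hρ : ρ = (1 + r) / Real.sqrt r)
    (δ : ℕ → ℝ) (hδ0 : δ 0 = 0)
    (hδ : ∀ t, δ (t + 1) = -1 / (ρ + δ t)) :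
    Tendsto δ atTop (nhds (-Real.sqrt r)) ∧
      -Real.sqrt r = -1 / (ρ + -Real.sqrt r) ∧
      (-Real.sqrt r) ^ 2 + ρ * (-Real.sqrt r) + 1 = 0 ∧
      |(-Real.sqrt r : ℝ)| < 1 := by
  set s := Real.sqrt r with hsdef
  have hs : 0 < s := Real.sqrt_pos.mpr hr0
  have hs1 : s < 1 := by
    rw [hsdef, show (1:ℝ) = Real.sqrt 1 by simp]
    exact Real.sqrt_lt_sqrt hr0.le hr1
  have hs2 : s ^ 2 = r := Real.sq_sqrt hr0.le
  have hρs : ρ = s + 1 / s := by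
    rw [hρ]
    field_simp
    nlinarith
  have hsρ : s * ρ = s ^ 2 + 1 := by
    rw [hρs]; field_simp
  have inv : ∀ t, -s < δ t ∧ δ t ≤ 0 ∧ |δ t + s| ≤ (s ^ 2) ^ t * s := by
    intro t
    induction t with
    | zero =>
      refine ⟨by simpa [hδ0] using hs, by simp [hδ0], ?_⟩
      simp [hδ0, abs_of_pos hs]
    | succ t ih =>
      obtain ⟨h1, h2, h3⟩ := ih
      have hden : 1 / s < ρ + δ t := by
        rw [hρs]; linarith
      have hdenpos : 0 < ρ + δ t := lt_trans (by positivity) hden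
      have hEq : δ (t + 1) + s = s * (δ t + s) / (ρ + δ t) := by
        rw [hδ t]
        field_simp
        nlinarith [hsρ]
      refine ⟨?_, ?_, ?_⟩
      · rw [hδ t]
        rw [neg_div, neg_lt_neg_iff, div_lt_iff₀ hdenpos]
        nlinarith [hsρ, mul_pos hs (show 0 < s + δ t by linarith)]
      · rw [hδ t, neg_div]
        simp only [neg_nonpos]
        positivity
      · rw [hEq, abs_div, abs_of_pos hdenpos, div_le_iff₀ hdenpos, abs_mul,
          abs_of_pos hs]
        have h4 : |δ t + s| ≤ (s ^ 2) ^ t * s := h3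
        have h5 : 1 / s ≤ ρ + δ t := hden.le
        calc s * |δ t + s| ≤ s * ((s ^ 2) ^ t * s) := by
              apply mul_le_mul_of_nonneg_left h4 hs.le
          _ = ((s ^ 2) ^ (t + 1) * s) * (1 / s) := by
              field_simp; ring
          _ ≤ (s ^ 2) ^ (t + 1) * s * (ρ + δ t) := by
              apply mul_le_mul_of_nonneg_left h5; positivity
  have htend : Tendsto δ atTop (nhds (-s)) := by
    rw [tendsto_iff_norm_sub_tendsto_zero]
    refine squeeze_zero (g := fun t => (s ^ 2) ^ t * s) (fun t => norm_nonneg _)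
      (fun t => ?_) ?_
    · simpa [sub_neg_eq_add] using (inv t).2.2
    · have h : Tendsto (fun t : ℕ => (s ^ 2) ^ t) atTop (nhds 0) :=
        tendsto_pow_atTop_nhds_zero_of_lt_one (by positivity) (by nlinarith)
      simpa using h.mul_const s
  refine ⟨htend, ?_, ?_, ?_⟩
  · rw [hρs]; field_simp; ring
  · rw [hρs]; field_simp; ring
  · rw [abs_neg, abs_of_pos hs]; exact hs1
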